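/- arXiv:1306.1513 — 2 statements merged into one kernel-verified Lean document; each statement's English description precedes it below -/
import Mathlib

section
/- Let E be an equivalence relation on Cantor space represented by a swap-closed triple tree T. Then for all X, Y ∈ 2^ω: X E Y if and only if for every countable ordinal α (that is, every ordinal α < ω₁), rk(T̂_{X,Y}) ≥ α. In other words, E = ⋂_{α < ω₁} E_α, where X E_α Y iff rk(T̂_{X,Y}) ≥ α. -/
open MeasureTheory

/-- Cantor space `2^ω`. -/
abbrev Cantor : Type := ℕ → Bool

/-- Triples `(σ, s, τ)` of finite sequences: `σ, τ` Boolean-valued, `s` natural-number valued. -/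
abbrev Trip : Type := List Bool × List ℕ × List Bool

/-- A *triple tree*: a set of equal-length triples of finite sequences which is prefix-closed
(simultaneously restricting all three coordinates to a common shorter length stays in the set). -/
def IsTripleTree (T : Set Trip) : Prop :=
  (∀ p ∈ T, p.2.1.length = p.1.length ∧ p.2.2.length = p.1.length) ∧
  (∀ p ∈ T, ∀ n : ℕ, (p.1.take n, p.2.1.take n, p.2.2.take n) ∈ T)

/-- The restriction `X↾n` of `X : 2^ω` to its first `n` values, as a finite sequence. -/
def res (X : Cantor) (n : ℕ) : List Bool := (List.range n).map X

/-- `T` represents the relation `E` on Cantor space: `X E Y` iff there is `f : ℕ → ℕ`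
with `(X↾n, f↾n, Y↾n) ∈ T` for every `n`. -/
def Represents (T : Set Trip) (E : Set (Cantor × Cantor)) : Prop :=
  ∀ X Y : Cantor,
    (X, Y) ∈ E ↔ ∃ f : ℕ → ℕ, ∀ n : ℕ, (res X n, (List.range n).map f, res Y n) ∈ T

/-- A triple tree is swap-closed if `(σ, s, τ) ∈ T ↔ (τ, s, σ) ∈ T`. -/
def SwapClosed (T : Set Trip) : Prop :=
  ∀ (σ : List Bool) (s : List ℕ) (τ : List Bool), (σ, s, τ) ∈ T ↔ (τ, s, σ) ∈ T

/-- Nodes of the trees `T^k_{X,Y}`: a node of length `n` is a tuple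
`(s₁, t₁, s₂, t₂, …, t_{k-1}, s_k)` with each `sᵢ ∈ ℕ^n`, `tⱼ ∈ Bool^n`, encoded
"transposed", as a list of length `n` whose `m`-th entry collects the `m`-th values
`((s₁ m, …, s_k m), (t₁ m, …, t_{k-1} m))`. -/
abbrev KNode : Type := List (List ℕ × List Bool)

/-- The sequence `s_{i+1} ∈ ℕ^n` (for `0 ≤ i < k`) encoded in a node `u`. -/
def col1 (u : KNode) (i : ℕ) : List ℕ := u.map fun e => e.1.getD i 0

/-- The sequence `t_{j+1} ∈ Bool^n` (for `0 ≤ j < k-1`) encoded in a node `u`. -/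
def col2 (u : KNode) (j : ℕ) : List Bool := u.map fun e => e.2.getD j false

/-- The `i`-th boundary sequence (`0 ≤ i ≤ k`): `X↾n` for `i = 0`, `Y↾n` for `i = k`,
and `t_i` for `0 < i < k`. -/
def bdry (X Y : Cantor) (k : ℕ) (u : KNode) (i : ℕ) : List Bool :=
  if i = 0 then res X u.length else if i = k then res Y u.length else col2 u (i - 1)

/-- The tree `T^k_{X,Y}`: nodes of length `n` are tuples `(s₁, t₁, …, t_{k-1}, s_k)` with
`(X↾n, s₁, t₁) ∈ T`, `(t₁, s₂, t₂) ∈ T`, …, `(t_{k-1}, s_k, Y↾n) ∈ T`. -/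
def TkTree (T : Set Trip) (X Y : Cantor) (k : ℕ) : Set KNode :=
  {u | (∀ e ∈ u, e.1.length = k ∧ e.2.length = k - 1) ∧
       ∀ i < k, (bdry X Y k u i, col1 u i, bdry X Y k u (i + 1)) ∈ T}

/-- Nodes of `T̂_{X,Y}`: the root (`none`), together with pairs `(k, u)`. -/
abbrev HatNode : Type := Option (ℕ × KNode)

/-- The tree `T̂_{X,Y}`: the disjoint union of the trees `T^k_{X,Y}` (`k ≥ 1`) with all the
roots identified: the root together with all pairs `(k, u)` with `u` a nonempty node
of `T^k_{X,Y}`. -/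
def HatTree (T : Set Trip) (X Y : Cantor) : Set HatNode :=
  {p | p = none ∨ ∃ k u, p = some (k, u) ∧ 1 ≤ k ∧ u ≠ [] ∧ u ∈ TkTree T X Y k}

/-- Proper (coordinatewise) prefix order on finite sequences. -/
def ListLt {A : Type*} (u v : List A) : Prop := u <+: v ∧ u ≠ v

/-- `HatLt p q`: the node `q` of `T̂` properly extends the node `p`: every node properly
extends the root, and `(k', u')` properly extends `(k, u)` iff `k = k'` and `u` is a proper
prefix of `u'`. -/
def HatLt : HatNode → HatNode → Prop
  | none, some _ => True
  | some (k, u), some (k', u') => k = k' ∧ ListLt u u'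
  | _, none => False

/-- `RankGe S lt u α`: the rank of the node `u` in the tree `(S, lt)` is `≥ α`, defined by
transfinite recursion: for every `β < α` there is a node `v ∈ S` properly extending `u`
(i.e. `lt u v`) whose rank is `≥ β`. -/
def RankGe {A : Type*} (S : Set A) (lt : A → A → Prop) (u : A) (α : Ordinal.{0}) : Prop :=
  ∀ β : Ordinal.{0}, β < α → ∃ v, v ∈ S ∧ lt u v ∧ RankGe S lt v β
termination_by α

/-- `rk(T̂_{X,Y}) ≥ α`: the root belongs to the tree and its rank is `≥ α`. -/
def HatRankGe (T : Set Trip) (X Y : Cantor) (α : Ordinal.{0}) : Prop :=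
  none ∈ HatTree T X Y ∧ RankGe (HatTree T X Y) HatLt none α

/-- `rk(T^k_{X,Y}) ≥ α`: the root (the empty tuple) belongs to the tree and its rank is `≥ α`. -/
def TkRankGe (T : Set Trip) (X Y : Cantor) (k : ℕ) (α : Ordinal.{0}) : Prop :=
  ([] : KNode) ∈ TkTree T X Y k ∧ RankGe (TkTree T X Y k) ListLt [] α

/-! ### Auxiliary lemmas -/

theorem my_rankGe_iff {A : Type*} (S : Set A) (lt : A → A → Prop) (u : A) (α : Ordinal.{0}) :
    RankGe S lt u α ↔ ∀ β : Ordinal.{0}, β < α → ∃ v, v ∈ S ∧ lt u v ∧ RankGe S lt v β := by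
  rw [RankGe]

theorem my_rankGe_of_chain {A : Type*} (S : Set A) (lt : A → A → Prop) (g : ℕ → A)
    (hg : ∀ n, g n ∈ S) (hlt : ∀ n, lt (g n) (g (n+1))) : ∀ α n, RankGe S lt (g n) α := by
  intro α
  induction α using Ordinal.induction with
  | h α IH =>
    intro n
    rw [my_rankGe_iff]
    intro β hβ
    exact ⟨g (n+1), hg _, hlt n, IH β hβ _⟩

theorem my_exists_chain_of_rankGe {A : Type} [Countable A] (S : Set A) (lt : A → A → Prop)
    (root : A) (h : ∀ α : Ordinal.{0}, α < (Cardinal.aleph 1).ord → RankGe S lt root α)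
    (hroot : root ∈ S) :
    ∃ g : ℕ → A, (∀ n, g n ∈ S) ∧ ∀ n, lt (g n) (g (n+1)) := by
  by_contra hc
  push_neg at hc
  set r : {a // a ∈ S} → {a // a ∈ S} → Prop := fun b a => lt a.1 b.1 with hr
  have wf : WellFounded r := by
    by_contra hwf
    have : ∃ a, ¬ Acc r a := by
      by_contra h2; push_neg at h2; exact hwf ⟨h2⟩
    obtain ⟨a, ha⟩ := this
    have step : ∀ x : {a : {a // a ∈ S} // ¬ Acc r a}, ∃ y : {a : {a // a ∈ S} // ¬ Acc r a},
        r y.1 x.1 := by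
      rintro ⟨x, hx⟩
      obtain ⟨b, hb1, hb2⟩ := exists_not_acc_lt_of_not_acc hx
      exact ⟨⟨b, hb1⟩, hb2⟩
    choose f hf using step
    set g : ℕ → A := fun n => ((f^[n] ⟨a, ha⟩).1 : {a // a ∈ S}).1 with hg
    obtain ⟨n, hn⟩ := hc g (fun n => ((f^[n] ⟨a, ha⟩).1).2)
    apply hn
    have h4 : f^[n+1] ⟨a, ha⟩ = f (f^[n] ⟨a, ha⟩) := Function.iterate_succ_apply' f n _
    have h3 := hf (f^[n] ⟨a, ha⟩)
    rw [← h4] at h3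
    exact h3
  haveI : IsWellFounded {a // a ∈ S} r := ⟨wf⟩
  have hlim : Order.IsSuccLimit ((Cardinal.aleph 1).ord) :=
    Cardinal.isSuccLimit_ord (Cardinal.aleph0_le_aleph 1)
  have hrk : ∀ a : {a // a ∈ S}, IsWellFounded.rank r a < (Cardinal.aleph 1).ord := by
    intro a
    induction a using IsWellFounded.induction r with
    | ind a IH =>
      rw [IsWellFounded.rank_eq]
      apply Ordinal.iSup_lt_ord
      · rw [Cardinal.isRegular_aleph_one.cof_eq]
        exact lt_of_le_of_lt Cardinal.mk_le_aleph0 (by simpa using Cardinal.aleph0_lt_aleph_one)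
      · intro b
        exact hlim.succ_lt (IH b b.2)
  have key : ∀ (α : Ordinal.{0}) (a : {a // a ∈ S}), RankGe S lt a.1 α →
      α ≤ IsWellFounded.rank r a := by
    intro α
    induction α using Ordinal.induction with
    | h α IH =>
      intro a ha
      rw [my_rankGe_iff] at ha
      by_contra hle
      push_neg at hle
      have : ∃ β < α, ¬ β < IsWellFounded.rank r a := by
        by_contra h2
        push_neg at h2
        exact hle.not_ge (le_of_forall_lt h2)
      obtain ⟨β, hβα, hβr⟩ := this
      obtain ⟨v, hvS, hvlt, hvr⟩ := ha β hβα
      have h2 : β ≤ IsWellFounded.rank r ⟨v, hvS⟩ := IH β hβα ⟨v, hvS⟩ hvr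
      have h3 : IsWellFounded.rank r ⟨v, hvS⟩ < IsWellFounded.rank r a :=
        IsWellFounded.rank_lt_of_rel (by exact hvlt)
      exact hβr (lt_of_le_of_lt h2 h3)
  set ρ := IsWellFounded.rank r ⟨root, hroot⟩ with hρ
  have h1 : ρ + 1 < (Cardinal.aleph 1).ord := by
    rw [Ordinal.add_one_eq_succ]
    exact hlim.succ_lt (hrk ⟨root, hroot⟩)
  have h2 := key (ρ + 1) ⟨root, hroot⟩ (h _ h1)
  rw [Ordinal.add_one_eq_succ, Order.succ_le_iff] at h2
  exact lt_irrefl _ h2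

theorem my_res_take (X : Cantor) (L n : ℕ) (h : n ≤ L) : (res X L).take n = res X n := by
  simp only [res, ← List.map_take, List.take_range, min_eq_left h]

theorem my_res_length (X : Cantor) (n : ℕ) : (res X n).length = n := by simp [res]

/-- From an infinite branch through `T^k_{X,Y}` (with `1 ≤ k`), conclude `(X, Y) ∈ E`. -/
theorem my_branch_to_E (E : Set (Cantor × Cantor)) (T : Set Trip)
    (hT : IsTripleTree T) (hrep : Represents T E)
    (hE : Equivalence fun X Y : Cantor => (X, Y) ∈ E)
    (X Y : Cantor) (k : ℕ) (hk : 1 ≤ k) (c : ℕ → KNode)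
    (hc1 : ∀ n, c n ∈ TkTree T X Y k) (hc2 : ∀ n, ListLt (c n) (c (n+1))) :
    (X, Y) ∈ E := by
  have hlt : ∀ n, (c n).length < (c (n+1)).length := by
    intro n
    rcases lt_or_eq_of_le (hc2 n).1.length_le with h1 | h1
    · exact h1
    · exact absurd ((hc2 n).1.eq_of_length h1) (hc2 n).2
  have hlen : ∀ n, n ≤ (c n).length := by
    intro n
    induction n with
    | zero => omega
    | succ n IH => have := hlt n; omega
  have hpre : ∀ a b, a ≤ b → c a <+: c b := by
    intro a b hab
    induction b with
    | zero => have : a = 0 := by omega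
              subst this; exact List.prefix_rfl
    | succ b IH =>
      rcases Nat.lt_or_ge a (b+1) with h1 | h1
      · exact (IH (by omega)).trans (hc2 b).1
      · have : a = b + 1 := by omega
        subst this; exact List.prefix_rfl
  -- the limit entry
  set ent : ℕ → List ℕ × List Bool := fun m => (c (m+1)).getD m ([], []) with hent
  have hcoh : ∀ m n, m < n → ∀ (hm : m < (c n).length), (c n)[m] = ent m := by
    intro m n hmn hm
    have hm1 : m < (c (m+1)).length := by have := hlen (m+1); omega
    have h5 := (hpre (m+1) n hmn).getElem hm1
    calc (c n)[m] = (c (m+1))[m] := h5.symm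
      _ = ent m := (List.getD_eq_getElem _ _ hm1).symm
  -- limit map helper
  have hmap : ∀ (γ : Type) (g : List ℕ × List Bool → γ) (n : ℕ),
      ((c n).map g).take n = (List.range n).map (fun m => g (ent m)) := by
    intro γ g n
    apply List.ext_getElem
    · simp [min_eq_left (hlen n)]
    · intro m h1 h2
      have hmn : m < n := by simpa using h2
      have hm : m < (c n).length := lt_of_lt_of_le hmn (hlen n)
      simp only [List.getElem_take, List.getElem_map, List.getElem_range]
      rw [hcoh m n hmn hm]
  -- the intermediate points
  set Z : ℕ → Cantor := fun i =>
    if i = 0 then X else if i = k then Y else fun m => (ent m).2.getD (i-1) false with hZ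
  have hbdry : ∀ n j, j ≤ k → (bdry X Y k (c n) j).take n = res (Z j) n := by
    intro n j hj
    by_cases h0 : j = 0
    · subst h0
      have e1 : bdry X Y k (c n) 0 = res X (c n).length := by simp [bdry]
      have e2 : Z 0 = X := by rw [hZ]; simp
      rw [e1, e2, my_res_take X _ n (hlen n)]
    · by_cases hk' : j = k
      · rw [hk']
        have e1 : bdry X Y k (c n) k = res Y (c n).length := by
          simp [bdry, show k ≠ 0 by omega]
        have e2 : Z k = Y := by rw [hZ]; simp [show k ≠ 0 by omega]
        rw [e1, e2, my_res_take Y _ n (hlen n)]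
      · have e1 : bdry X Y k (c n) j = col2 (c n) (j-1) := by simp [bdry, h0, hk']
        rw [e1, col2, hmap]
        rw [hZ, res]
        apply List.map_congr_left
        intro m _
        simp [h0, hk']
  have hstep : ∀ i < k, (Z i, Z (i+1)) ∈ E := by
    intro i hi
    rw [hrep]
    refine ⟨fun m => (ent m).1.getD i 0, fun n => ?_⟩
    have htrip := (hc1 n).2 i hi
    have h6 := hT.2 _ htrip n
    simp only at h6
    rw [hbdry n i hi.le, hbdry n (i+1) hi] at h6
    have h7 : (col1 (c n) i).take n =
        (List.range n).map (fun m => (ent m).1.getD i 0) := by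
      rw [col1, hmap]
    rw [h7] at h6
    exact h6
  have hchain : ∀ i, i ≤ k → (X, Z i) ∈ E := by
    intro i
    induction i with
    | zero => intro _; have : Z 0 = X := by rw [hZ]; simp
              rw [this]; exact hE.refl X
    | succ i IH =>
      intro h
      exact hE.trans (IH (by omega)) (hstep i (by omega))
  have h8 := hchain k le_rfl
  have h9 : Z k = Y := by rw [hZ]; simp [show k ≠ 0 by omega]
  rwa [h9] at h8

/-- From a witness `f` for `X E Y`, the hat tree has rank `≥ α` for every ordinal. -/
theorem my_E_to_rank (T : Set Trip) (X Y : Cantor) (f : ℕ → ℕ)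
    (hf : ∀ n : ℕ, (res X n, (List.range n).map f, res Y n) ∈ T) :
    ∀ α : Ordinal.{0}, HatRankGe T X Y α := by
  set b : ℕ → KNode := fun n => (List.range n).map (fun m => ([f m], ([] : List Bool)))
    with hb
  have hblen : ∀ n, (b n).length = n := by intro n; simp [hb]
  have hbmem : ∀ n, b n ∈ TkTree T X Y 1 := by
    intro n
    constructor
    · intro e he
      rw [hb] at he
      simp only [List.mem_map] at he
      obtain ⟨m, _, rfl⟩ := he
      simp
    · intro i hi
      have hi0 : i = 0 := by omega
      subst hi0
      have e0 : bdry X Y 1 (b n) 0 = res X n := by simp [bdry, hblen n]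
      have e1 : bdry X Y 1 (b n) 1 = res Y n := by simp [bdry, hblen n]
      have e2 : col1 (b n) 0 = (List.range n).map f := by
        rw [col1, hb]
        simp [List.map_map, Function.comp]
      rw [e0, e1, e2]
      exact hf n
  set H : ℕ → HatNode := fun n => some (1, b (n+1)) with hH
  have hHmem : ∀ n, H n ∈ HatTree T X Y := by
    intro n
    refine Or.inr ⟨1, b (n+1), rfl, le_rfl, ?_, hbmem (n+1)⟩
    intro h
    have := congrArg List.length h
    rw [hblen] at this
    simp at this
  have hHlt : ∀ n, HatLt (H n) (H (n+1)) := by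
    intro n
    refine ⟨rfl, ⟨[([f (n+1)], [])], ?_⟩, ?_⟩
    · rw [hb]
      simp only [List.range_succ (n := n+1), List.map_append]
      rfl
    · intro h
      have := congrArg List.length h
      rw [hblen, hblen] at this
      omega
  intro α
  refine ⟨Or.inl rfl, ?_⟩
  rw [my_rankGe_iff]
  intro β _
  exact ⟨H 0, hHmem 0, trivial, my_rankGe_of_chain _ _ H hHmem hHlt β 0⟩

/-- If an equivalence relation `E` on Cantor space is represented by a
swap-closed triple tree `T`, then for all `X, Y ∈ 2^ω`: `X E Y` iff for every countable
ordinal `α` (i.e. every `α < ω₁`), `rk(T̂_{X,Y}) ≥ α`; that is, `E = ⋂_{α < ω₁} E_α` where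
`X E_α Y ↔ rk(T̂_{X,Y}) ≥ α`. -/
theorem statement10 (E : Set (Cantor × Cantor)) (T : Set Trip)
    (hT : IsTripleTree T) (hswap : SwapClosed T) (hrep : Represents T E)
    (hE : Equivalence fun X Y : Cantor => (X, Y) ∈ E) :
    ∀ X Y : Cantor,
      (X, Y) ∈ E ↔ ∀ α : Ordinal.{0}, α < (Cardinal.aleph 1).ord → HatRankGe T X Y α := by
  intro X Y
  constructor
  · intro hXY α _
    obtain ⟨f, hf⟩ := (hrep X Y).mp hXY
    exact my_E_to_rank T X Y f hf α
  · intro h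
    obtain ⟨g, hg, hlt⟩ := my_exists_chain_of_rankGe (HatTree T X Y) HatLt none
      (fun α hα => (h α hα).2) (Or.inl rfl)
    have hne : ∀ n, g (n+1) ≠ none := by
      intro n hn
      have h2 := hlt n
      rw [hn] at h2
      rcases hgn : g n with _ | q <;> rw [hgn] at h2 <;> exact h2
    choose p hp using fun n => Option.ne_none_iff_exists'.mp (hne n)
    have hstep2 : ∀ n, (p n).1 = (p (n+1)).1 ∧ ListLt (p n).2 (p (n+1)).2 := by
      intro n
      have h2 := hlt (n+1)
      rw [hp n, hp (n+1)] at h2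
      rcases hq1 : p n with ⟨k1, u1⟩
      rcases hq2 : p (n+1) with ⟨k2, u2⟩
      rw [hq1, hq2] at h2
      exact h2
    set k := (p 0).1 with hk
    have hk_all : ∀ n, (p n).1 = k := by
      intro n
      induction n with
      | zero => rfl
      | succ n IH => rw [← (hstep2 n).1]; exact IH
    have hmem : ∀ n, 1 ≤ k ∧ (p n).2 ∈ TkTree T X Y k := by
      intro n
      have h2 := hg (n+1)
      rw [hp n] at h2
      rcases h2 with h2 | ⟨k', u', he, hk', _, hu2⟩
      · exact absurd h2 (by simp)
      · have h3 : p n = (k', u') := Option.some.inj he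
        have h4 : k' = k := by rw [← hk_all n, h3]
        rw [h4] at hk' hu2
        refine ⟨hk', ?_⟩
        rw [h3]
        exact hu2
    exact my_branch_to_E E T hT hrep hE X Y k (hmem 0).1 (fun n => (p n).2)
      (fun n => (hmem n).2) (fun n => (hstep2 n).2)
end

section
/- Consider the space (ℕ × ℕ) → Bool of codes of binary relations on ℕ (with the product topology), and say that X codes a well-order if the relation R_X := {(m, n) : X(m, n) = true} is a linear order on all of ℕ that is well-founded. Define the relation E_{ω₁} by: X E_{ω₁} Y iff either (neither X nor Y codes a well-order) or (both X and Y code well-orders and R_X is order-isomorphic to R_Y). Then E_{ω₁} is an equivalence relation, it is an analytic subset of ((ℕ × ℕ) → Bool) × ((ℕ × ℕ) → Bool), and the set of its equivalence classes (the quotient) has cardinality exactly ℵ₁. -/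
open MeasureTheory

/-- Codes of binary relations on `ℕ`. -/
abbrev RelCode : Type := (ℕ × ℕ) → Bool

/-- The binary relation `R_X` on `ℕ` coded by `X`. -/
def relOf (X : RelCode) : ℕ → ℕ → Prop := fun m n => X (m, n) = true

/-- `X` codes a well-order: `R_X` is a linear order on all of `ℕ` such that every nonempty
subset of `ℕ` has an `R_X`-least element. -/
def CodesWO (X : RelCode) : Prop :=
  IsLinearOrder ℕ (relOf X) ∧ ∀ S : Set ℕ, S.Nonempty → ∃ m ∈ S, ∀ n ∈ S, relOf X m n

/-- `R_X` and `R_Y` are order-isomorphic: some bijection of `ℕ` with itself carries one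
onto the other. -/
def OrderIsoCodes (X Y : RelCode) : Prop :=
  ∃ e : ℕ ≃ ℕ, ∀ m n : ℕ, relOf X m n ↔ relOf Y (e m) (e n)

/-- The relation `E_{ω₁}`: `X E_{ω₁} Y` iff either neither `X` nor `Y` codes a well-order,
or both do and `R_X` is order-isomorphic to `R_Y`. -/
def Eomega1 : Set (RelCode × RelCode) :=
  {p | (¬ CodesWO p.1 ∧ ¬ CodesWO p.2) ∨
       (CodesWO p.1 ∧ CodesWO p.2 ∧ OrderIsoCodes p.1 p.2)}

/-! ### Auxiliary lemmas -/

instance : PolishSpace RelCode := by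
  have : TopologicalSpace.SeparableSpace RelCode := inferInstance
  have : TopologicalSpace.IsCompletelyMetrizableSpace RelCode := inferInstance
  infer_instance
instance : PolishSpace (RelCode × (ℕ → ℕ)) := inferInstance
instance : PolishSpace (RelCode × RelCode) := inferInstance
instance : PolishSpace ((ℕ → ℕ) × (ℕ → ℕ)) := inferInstance
instance : PolishSpace ((RelCode × RelCode) × ((ℕ → ℕ) × (ℕ → ℕ))) := by
  have : TopologicalSpace.SeparableSpace ((RelCode × RelCode) × ((ℕ → ℕ) × (ℕ → ℕ))) := inferInstance
  have : TopologicalSpace.IsCompletelyMetrizableSpace ((RelCode × RelCode) × ((ℕ → ℕ) × (ℕ → ℕ))) := inferInstance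
  infer_instance

section Aux

open Set

/-- Transfer of well-order codes along an order isomorphism. -/
lemma codesWO_of_iso {X Y : RelCode} (e : ℕ ≃ ℕ)
    (hiso : ∀ m n : ℕ, relOf X m n ↔ relOf Y (e m) (e n)) (h : CodesWO X) : CodesWO Y := by
  haveI := h.1
  have key : ∀ a b : ℕ, relOf Y a b ↔ relOf X (e.symm a) (e.symm b) := by
    intro a b
    have := hiso (e.symm a) (e.symm b)
    simpa using this.symm
  constructor
  · refine { refl := ?_, trans := ?_, antisymm := ?_, total := ?_ }
    · intro a
      rw [key]
      exact refl_of (relOf X) _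
    · intro a b c hab hbc
      rw [key] at *
      exact _root_.trans_of (relOf X) hab hbc
    · intro a b hab hba
      rw [key] at hab hba
      have h1 := _root_.antisymm hab hba
      have h2 := congrArg e h1
      simpa using h2
    · intro a b
      rcases total_of (relOf X) (e.symm a) (e.symm b) with h' | h'
      · exact Or.inl ((key a b).2 h')
      · exact Or.inr ((key b a).2 h')
  · intro S hS
    obtain ⟨m, hm, hmin⟩ := h.2 (e.symm '' S) (hS.image _)
    obtain ⟨a, haS, rfl⟩ := hm
    refine ⟨a, haS, fun n hn => ?_⟩
    rw [key]
    simpa using hmin (e.symm n) ⟨n, hn, rfl⟩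

lemma iso_symm {X Y : RelCode} (e : ℕ ≃ ℕ)
    (hiso : ∀ m n : ℕ, relOf X m n ↔ relOf Y (e m) (e n)) :
    ∀ m n : ℕ, relOf Y m n ↔ relOf X (e.symm m) (e.symm n) := by
  intro m n
  have := hiso (e.symm m) (e.symm n)
  simpa using this.symm

/-! #### The equivalence -/

lemma eomega1_equiv : Equivalence fun X Y : RelCode => (X, Y) ∈ Eomega1 := by
  constructor
  · intro X
    by_cases h : CodesWO X
    · exact Or.inr ⟨h, h, Equiv.refl ℕ, fun m n => Iff.rfl⟩
    · exact Or.inl ⟨h, h⟩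
  · rintro X Y (⟨h1, h2⟩ | ⟨h1, h2, e, he⟩)
    · exact Or.inl ⟨h2, h1⟩
    · exact Or.inr ⟨h2, h1, e.symm, iso_symm e he⟩
  · rintro X Y Z (⟨h1, h2⟩ | ⟨h1, h2, e, he⟩) (⟨h3, h4⟩ | ⟨h3, h4, f, hf⟩)
    · exact Or.inl ⟨h1, h4⟩
    · exact absurd h3 (by exact fun h => h2 h)
    · exact absurd h2 h3
    · refine Or.inr ⟨h1, h4, e.trans f, fun m n => ?_⟩
      exact (he m n).trans (hf (e m) (e n))

/-! #### Topology helpers -/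

lemma continuous_eval_discrete {Γ ι π : Type*} [TopologicalSpace Γ] [TopologicalSpace ι]
    [DiscreteTopology ι] [TopologicalSpace π]
    {F : Γ → ι → π} {g : Γ → ι} (hF : Continuous F) (hg : Continuous g) :
    Continuous fun γ => F γ (g γ) := by
  rw [continuous_def]
  intro U hU
  have h : (fun γ => F γ (g γ)) ⁻¹' U = ⋃ i : ι, {γ | g γ = i} ∩ {γ | F γ i ∈ U} := by
    ext γ
    simp only [mem_preimage, mem_iUnion, mem_inter_iff, mem_setOf_eq]
    constructor
    · intro h; exact ⟨g γ, rfl, h⟩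
    · rintro ⟨i, hi, h⟩; rw [hi]; exact h
  rw [h]
  refine isOpen_iUnion fun i => IsOpen.inter ?_ ?_
  · exact IsOpen.preimage hg (isOpen_discrete {i})
  · exact IsOpen.preimage ((continuous_apply i).comp hF) hU

lemma analyticSet_prod {α β : Type*} [TopologicalSpace α] [TopologicalSpace β]
    {s : Set α} {t : Set β} (hs : AnalyticSet s) (ht : AnalyticSet t) :
    AnalyticSet (s ×ˢ t) := by
  obtain ⟨γ, tγ, pγ, f, fc, frange⟩ := analyticSet_iff_exists_polishSpace_range.1 hs
  obtain ⟨δ, tδ, pδ, g, gc, grange⟩ := analyticSet_iff_exists_polishSpace_range.1 ht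
  letI := tγ; letI := pγ; letI := tδ; letI := pδ
  rw [← frange, ← grange, ← Set.range_prodMap]
  exact analyticSet_iff_exists_polishSpace_range.2
    ⟨γ × δ, inferInstance, inferInstance, _, fc.prodMap gc, rfl⟩

lemma analyticSet_union {α : Type*} [TopologicalSpace α] {s t : Set α}
    (hs : AnalyticSet s) (ht : AnalyticSet t) : AnalyticSet (s ∪ t) := by
  rw [Set.union_eq_iUnion]
  exact AnalyticSet.iUnion (fun b => by cases b <;> simpa)

lemma isClosed_eval (q : ℕ × ℕ) (b : Bool) : IsClosed {X : RelCode | X q = b} :=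
  IsClosed.preimage (continuous_apply q) isClosed_singleton

/-- Characterization of being a linear order code. -/
lemma LO_iff (X : RelCode) : IsLinearOrder ℕ (relOf X) ↔
    (∀ n, relOf X n n) ∧ (∀ m n p, relOf X m n → relOf X n p → relOf X m p) ∧
    (∀ m n, relOf X m n → relOf X n m → m = n) ∧ (∀ m n, relOf X m n ∨ relOf X n m) := by
  constructor
  · intro h
    haveI := h
    exact ⟨fun n => refl_of (relOf X) n, fun m n p => _root_.trans_of (relOf X),
      fun m n => _root_.antisymm, fun m n => total_of (relOf X) m n⟩
  · rintro ⟨h1, h2, h3, h4⟩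
    exact { refl := h1, trans := h2, antisymm := h3, total := h4 }

lemma isClosed_LO : IsClosed {X : RelCode | IsLinearOrder ℕ (relOf X)} := by
  have hset : {X : RelCode | IsLinearOrder ℕ (relOf X)} =
      (⋂ n, {X : RelCode | X (n, n) = true}) ∩
      ((⋂ m, ⋂ n, ⋂ p, ({X : RelCode | X (m, n) = false} ∪ {X : RelCode | X (n, p) = false}
          ∪ {X : RelCode | X (m, p) = true})) ∩
      ((⋂ m, ⋂ n, ({X : RelCode | X (m, n) = false} ∪ {X : RelCode | X (n, m) = false}
          ∪ {X : RelCode | (m : ℕ) = n})) ∩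
      (⋂ m, ⋂ n, ({X : RelCode | X (m, n) = true} ∪ {X : RelCode | X (n, m) = true})))) := by
    ext X
    simp only [mem_setOf_eq, mem_inter_iff, mem_iInter, mem_union, LO_iff, relOf]
    constructor
    · rintro ⟨h1, h2, h3, h4⟩
      refine ⟨h1, fun m n p => ?_, fun m n => ?_, fun m n => h4 m n⟩
      · by_cases hmn : X (m, n) = true
        · by_cases hnp : X (n, p) = true
          · exact Or.inr (h2 m n p hmn hnp)
          · exact Or.inl (Or.inr (by simpa using hnp))
        · exact Or.inl (Or.inl (by simpa using hmn))
      · by_cases hmn : X (m, n) = true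
        · by_cases hnm : X (n, m) = true
          · exact Or.inr (h3 m n hmn hnm)
          · exact Or.inl (Or.inr (by simpa using hnm))
        · exact Or.inl (Or.inl (by simpa using hmn))
    · rintro ⟨h1, h2, h3, h4⟩
      refine ⟨h1, fun m n p hmn hnp => ?_, fun m n hmn hnm => ?_, h4⟩
      · rcases h2 m n p with ((h | h) | h)
        · rw [hmn] at h; exact absurd h (by simp)
        · rw [hnp] at h; exact absurd h (by simp)
        · exact h
      · rcases h3 m n with ((h | h) | h)
        · rw [hmn] at h; exact absurd h (by simp)
        · rw [hnm] at h; exact absurd h (by simp)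
        · exact h
  rw [hset]
  refine IsClosed.inter (isClosed_iInter fun n => isClosed_eval _ _)
    (IsClosed.inter (isClosed_iInter fun m => isClosed_iInter fun n => isClosed_iInter fun p =>
      (((isClosed_eval _ _).union (isClosed_eval _ _)).union (isClosed_eval _ _)))
    (IsClosed.inter (isClosed_iInter fun m => isClosed_iInter fun n => ?_)
      (isClosed_iInter fun m => isClosed_iInter fun n =>
        ((isClosed_eval _ _).union (isClosed_eval _ _)))))
  by_cases hmn : m = n
  · have : {X : RelCode | (m : ℕ) = n} = Set.univ := by
      ext X; simp [hmn]
    rw [this]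
    simp [Set.union_univ]
  · have : {X : RelCode | (m : ℕ) = n} = (∅ : Set RelCode) := by
      ext X; simp [hmn]
    rw [this]
    simpa using ((isClosed_eval (m, n) false).union (isClosed_eval (n, m) false))

/-! #### The non-well-order part is analytic -/

lemma notWO_iff (X : RelCode) : ¬ CodesWO X ↔
    (¬ IsLinearOrder ℕ (relOf X)) ∨ ∃ f : ℕ → ℕ, ∀ i, ¬ relOf X (f i) (f (i + 1)) := by
  constructor
  · intro h
    by_cases hLO : IsLinearOrder ℕ (relOf X)
    · right
      have : ∃ S : Set ℕ, S.Nonempty ∧ ∀ m ∈ S, ∃ n ∈ S, ¬ relOf X m n := by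
        by_contra hc
        push_neg at hc
        exact h ⟨hLO, fun S hS => hc S hS⟩
      obtain ⟨S, hS, hbad⟩ := this
      have hc : ∀ x : S, ∃ y : S, ¬ relOf X x y := by
        rintro ⟨x, hx⟩
        obtain ⟨n, hn, hrn⟩ := hbad x hx
        exact ⟨⟨n, hn⟩, hrn⟩
      choose c hc using hc
      obtain ⟨x0, hx0⟩ := hS
      refine ⟨fun i => ((c^[i]) ⟨x0, hx0⟩ : S).val, fun i => ?_⟩
      have hstep : (c^[i + 1]) (⟨x0, hx0⟩ : S) = c ((c^[i]) ⟨x0, hx0⟩) :=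
        Function.iterate_succ_apply' c i _
      simp only [hstep]
      exact hc _
    · exact Or.inl hLO
  · rintro (h | ⟨f, hf⟩) hWO
    · exact h hWO.1
    · obtain ⟨m, hm, hmin⟩ := hWO.2 (Set.range f) ⟨f 0, 0, rfl⟩
      obtain ⟨k, rfl⟩ := hm
      exact hf k (hmin (f (k + 1)) ⟨k + 1, rfl⟩)

lemma analyticSet_notWO : AnalyticSet {X : RelCode | ¬ CodesWO X} := by
  have hdecomp : {X : RelCode | ¬ CodesWO X} =
      {X : RelCode | IsLinearOrder ℕ (relOf X)}ᶜ ∪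
      (Prod.fst '' (⋂ i, {γ : RelCode × (ℕ → ℕ) | γ.1 (γ.2 i, γ.2 (i + 1)) = false})) := by
    ext X
    simp only [mem_setOf_eq, mem_union, mem_compl_iff, mem_image, mem_iInter, notWO_iff]
    constructor
    · rintro (h | ⟨f, hf⟩)
      · exact Or.inl h
      · refine Or.inr ⟨(X, f), fun i => ?_, rfl⟩
        show X (f i, f (i + 1)) = false
        simpa [relOf] using hf i
    · rintro (h | ⟨⟨Y, f⟩, hf, rfl⟩)
      · exact Or.inl h
      · refine Or.inr ⟨f, fun i => ?_⟩
        have h2 : Y (f i, f (i + 1)) = false := hf i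
        simp [relOf, h2]
  rw [hdecomp]
  apply analyticSet_union
  · have : IsOpen {X : RelCode | IsLinearOrder ℕ (relOf X)}ᶜ := isClosed_LO.isOpen_compl
    have h2 := this.analyticSet_image (f := id) continuous_id
    simpa using h2
  · apply AnalyticSet.image_of_continuous _ continuous_fst
    apply IsClosed.analyticSet
    apply isClosed_iInter
    intro i
    have hcont : Continuous fun γ : RelCode × (ℕ → ℕ) => γ.1 (γ.2 i, γ.2 (i + 1)) := by
      apply continuous_eval_discrete continuous_fst
      exact Continuous.prodMk ((continuous_apply i).comp continuous_snd)
        ((continuous_apply (i + 1)).comp continuous_snd)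
    exact IsClosed.preimage hcont isClosed_singleton

/-! #### The isomorphism part is analytic -/

set_option synthInstance.maxHeartbeats 1000000 in
set_option maxHeartbeats 1000000 in
lemma analyticSet_isoLO :
    AnalyticSet {p : RelCode × RelCode | OrderIsoCodes p.1 p.2 ∧ IsLinearOrder ℕ (relOf p.1)} := by
  have himg : {p : RelCode × RelCode | OrderIsoCodes p.1 p.2 ∧ IsLinearOrder ℕ (relOf p.1)}
      = Prod.fst '' {γ : (RelCode × RelCode) × ((ℕ → ℕ) × (ℕ → ℕ)) |
          IsLinearOrder ℕ (relOf γ.1.1) ∧ (∀ n, γ.2.2 (γ.2.1 n) = n) ∧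
          (∀ n, γ.2.1 (γ.2.2 n) = n) ∧ ∀ m n : ℕ, γ.1.1 (m, n) = γ.1.2 (γ.2.1 m, γ.2.1 n)} := by
    ext p
    simp only [Set.mem_setOf_eq, Set.mem_image]
    constructor
    · rintro ⟨⟨e, he⟩, hLO⟩
      refine ⟨(p, (⇑e, ⇑e.symm)), ⟨hLO, fun n => e.symm_apply_apply n,
        fun n => e.apply_symm_apply n, fun m n => ?_⟩, rfl⟩
      have h3 := he m n
      simp only [relOf] at h3
      exact Bool.eq_iff_iff.2 h3
    · rintro ⟨⟨⟨X, Y⟩, ⟨u, v⟩⟩, ⟨hLO, h1, h2, h3⟩, rfl⟩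
      refine ⟨⟨⟨u, v, h1, h2⟩, fun m n => ?_⟩, hLO⟩
      have h3' : X (m, n) = Y (u m, u n) := h3 m n
      show relOf X m n ↔ relOf Y (u m) (u n)
      simp only [relOf]
      rw [h3']
  rw [himg]
  apply AnalyticSet.image_of_continuous _ continuous_fst
  apply IsClosed.analyticSet
  have c1 : IsClosed {γ : (RelCode × RelCode) × ((ℕ → ℕ) × (ℕ → ℕ)) |
      IsLinearOrder ℕ (relOf γ.1.1)} :=
    IsClosed.preimage (continuous_fst.comp continuous_fst) isClosed_LO
  have c2 : IsClosed {γ : (RelCode × RelCode) × ((ℕ → ℕ) × (ℕ → ℕ)) |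
      ∀ n, γ.2.2 (γ.2.1 n) = n} := by
    rw [show {γ : (RelCode × RelCode) × ((ℕ → ℕ) × (ℕ → ℕ)) | ∀ n, γ.2.2 (γ.2.1 n) = n}
        = ⋂ n, {γ : (RelCode × RelCode) × ((ℕ → ℕ) × (ℕ → ℕ)) | γ.2.2 (γ.2.1 n) = n} by
      ext γ; simp]
    refine isClosed_iInter fun n => isClosed_eq ?_ continuous_const
    exact continuous_eval_discrete (continuous_snd.comp continuous_snd)
      ((continuous_apply n).comp (continuous_fst.comp continuous_snd))
  have c3 : IsClosed {γ : (RelCode × RelCode) × ((ℕ → ℕ) × (ℕ → ℕ)) |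
      ∀ n, γ.2.1 (γ.2.2 n) = n} := by
    rw [show {γ : (RelCode × RelCode) × ((ℕ → ℕ) × (ℕ → ℕ)) | ∀ n, γ.2.1 (γ.2.2 n) = n}
        = ⋂ n, {γ : (RelCode × RelCode) × ((ℕ → ℕ) × (ℕ → ℕ)) | γ.2.1 (γ.2.2 n) = n} by
      ext γ; simp]
    refine isClosed_iInter fun n => isClosed_eq ?_ continuous_const
    exact continuous_eval_discrete (continuous_fst.comp continuous_snd)
      ((continuous_apply n).comp (continuous_snd.comp continuous_snd))
  have c4 : IsClosed {γ : (RelCode × RelCode) × ((ℕ → ℕ) × (ℕ → ℕ)) |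
      ∀ m n : ℕ, γ.1.1 (m, n) = γ.1.2 (γ.2.1 m, γ.2.1 n)} := by
    rw [show {γ : (RelCode × RelCode) × ((ℕ → ℕ) × (ℕ → ℕ)) |
        ∀ m n : ℕ, γ.1.1 (m, n) = γ.1.2 (γ.2.1 m, γ.2.1 n)}
        = ⋂ m, ⋂ n, {γ : (RelCode × RelCode) × ((ℕ → ℕ) × (ℕ → ℕ)) |
          γ.1.1 (m, n) = γ.1.2 (γ.2.1 m, γ.2.1 n)} by ext γ; simp]
    refine isClosed_iInter fun m => isClosed_iInter fun n => isClosed_eq ?_ ?_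
    · exact (continuous_apply ((m : ℕ), (n : ℕ))).comp (continuous_fst.comp continuous_fst)
    · refine continuous_eval_discrete (continuous_snd.comp continuous_fst) ?_
      exact Continuous.prodMk
        ((continuous_apply m).comp (continuous_fst.comp continuous_snd))
        ((continuous_apply n).comp (continuous_fst.comp continuous_snd))
  have hset : {γ : (RelCode × RelCode) × ((ℕ → ℕ) × (ℕ → ℕ)) |
      IsLinearOrder ℕ (relOf γ.1.1) ∧ (∀ n, γ.2.2 (γ.2.1 n) = n) ∧
      (∀ n, γ.2.1 (γ.2.2 n) = n) ∧ ∀ m n : ℕ, γ.1.1 (m, n) = γ.1.2 (γ.2.1 m, γ.2.1 n)}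
      = {γ | IsLinearOrder ℕ (relOf γ.1.1)} ∩ ({γ | ∀ n, γ.2.2 (γ.2.1 n) = n} ∩
        ({γ | ∀ n, γ.2.1 (γ.2.2 n) = n} ∩
         {γ | ∀ m n : ℕ, γ.1.1 (m, n) = γ.1.2 (γ.2.1 m, γ.2.1 n)})) := rfl
  rw [hset]
  exact c1.inter (c2.inter (c3.inter c4))

/-! #### Decomposition of `Eomega1` -/

lemma eomega1_decomp : Eomega1 =
    ({X : RelCode | ¬ CodesWO X} ×ˢ {X : RelCode | ¬ CodesWO X}) ∪
    {p : RelCode × RelCode | OrderIsoCodes p.1 p.2 ∧ IsLinearOrder ℕ (relOf p.1)} := by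
  ext ⟨X, Y⟩
  simp only [Eomega1, Set.mem_union, Set.mem_prod, Set.mem_setOf_eq]
  constructor
  · rintro (⟨h1, h2⟩ | ⟨h1, h2, hiso⟩)
    · exact Or.inl ⟨h1, h2⟩
    · exact Or.inr ⟨hiso, h1.1⟩
  · rintro (⟨h1, h2⟩ | ⟨⟨e, he⟩, hLO⟩)
    · exact Or.inl ⟨h1, h2⟩
    · by_cases hX : CodesWO X
      · exact Or.inr ⟨hX, codesWO_of_iso e he hX, e, he⟩
      · refine Or.inl ⟨hX, fun hY => hX ?_⟩
        exact codesWO_of_iso e.symm (iso_symm e he) hY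

lemma analyticSet_eomega1 : AnalyticSet Eomega1 := by
  rw [eomega1_decomp]
  exact analyticSet_union (analyticSet_prod analyticSet_notWO analyticSet_notWO)
    analyticSet_isoLO

/-! #### Cardinality of the quotient -/

/-- The strict relation associated with a code. -/
def sLT (X : RelCode) : ℕ → ℕ → Prop := fun m n => relOf X m n ∧ m ≠ n

lemma isWellOrder_sLT {X : RelCode} (h : CodesWO X) : IsWellOrder ℕ (sLT X) := by
  haveI := h.1
  refine { trichotomous := ?tri, wf := ?wf }
  case tri =>
    intro a b hab hba
    by_contra hne
    rcases total_of (relOf X) a b with h' | h'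
    · exact hab ⟨h', hne⟩
    · exact hba ⟨h', Ne.symm hne⟩
  case wf =>
    rw [WellFounded.wellFounded_iff_has_min]
    intro S hS
    obtain ⟨m, hm, hmin⟩ := h.2 S hS
    exact ⟨m, hm, fun x hx hlt => hlt.2 (_root_.antisymm hlt.1 (hmin x hx))⟩

/-- The ordinal invariant of a code: the order type of the strict order if it codes
a well-order, `0` otherwise. -/
noncomputable def ordInv (X : RelCode) : Ordinal :=
  @dite _ (CodesWO X) (Classical.dec _)
    (fun h => @Ordinal.type ℕ (sLT X) (isWellOrder_sLT h)) (fun _ => 0)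

lemma ordInv_lt (X : RelCode) : ordInv X < (Cardinal.aleph 1).ord := by
  rw [ordInv]
  split
  · rw [Cardinal.lt_ord, Ordinal.card_type, Cardinal.mk_nat]
    exact Cardinal.aleph0_lt_aleph_one
  · rw [Cardinal.lt_ord, Ordinal.card_zero]
    exact lt_of_le_of_lt zero_le Cardinal.aleph0_lt_aleph_one

lemma rel_iff_sLT {X : RelCode} (h : CodesWO X) (m n : ℕ) :
    relOf X m n ↔ sLT X m n ∨ m = n := by
  haveI := h.1
  constructor
  · intro hr
    rcases eq_or_ne m n with rfl | hne
    · exact Or.inr rfl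
    · exact Or.inl ⟨hr, hne⟩
  · rintro (⟨hr, _⟩ | rfl)
    · exact hr
    · exact refl_of (relOf X) m

lemma ordInv_eq_of_E {X Y : RelCode} (h : (X, Y) ∈ Eomega1) : ordInv X = ordInv Y := by
  rcases h with ⟨h1, h2⟩ | ⟨h1, h2, e, he⟩
  · rw [ordInv, ordInv, dif_neg h1, dif_neg h2]
  · rw [ordInv, ordInv, dif_pos h1, dif_pos h2]
    letI := isWellOrder_sLT h1
    letI := isWellOrder_sLT h2
    refine Ordinal.type_eq.2 ⟨RelIso.mk e ?_⟩
    intro a b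
    show sLT Y (e a) (e b) ↔ sLT X a b
    unfold sLT
    rw [← he a b]
    have : e a = e b ↔ a = b := e.apply_eq_iff_eq
    constructor
    · rintro ⟨hr, hne⟩; exact ⟨hr, fun hab => hne (by rw [hab])⟩
    · rintro ⟨hr, hne⟩; exact ⟨hr, fun hab => hne (this.1 hab)⟩

lemma E_of_ordInv_eq {X Y : RelCode} (h : ordInv X = ordInv Y) : (X, Y) ∈ Eomega1 := by
  by_cases hX : CodesWO X <;> by_cases hY : CodesWO Y
  · refine Or.inr ⟨hX, hY, ?_⟩
    rw [ordInv, ordInv, dif_pos hX, dif_pos hY] at h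
    letI := isWellOrder_sLT hX
    letI := isWellOrder_sLT hY
    obtain ⟨f⟩ := Ordinal.type_eq.1 h
    refine ⟨f.toEquiv, fun m n => ?_⟩
    rw [rel_iff_sLT hX, rel_iff_sLT hY]
    have h1 : sLT X m n ↔ sLT Y (f m) (f n) := (f.map_rel_iff (a := m) (b := n)).symm
    have h2 : (m = n) ↔ ((f m : ℕ) = f n) := by
      constructor
      · intro h'; rw [h']
      · intro h'; exact f.injective h'
    rw [h1, h2]
    exact Iff.rfl
  · exfalso
    rw [ordInv, ordInv, dif_pos hX, dif_neg hY] at h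
    letI := isWellOrder_sLT hX
    exact Ordinal.type_ne_zero_iff_nonempty.2 ⟨0⟩ h
  · exfalso
    rw [ordInv, ordInv, dif_neg hX, dif_pos hY] at h
    letI := isWellOrder_sLT hY
    exact Ordinal.type_ne_zero_iff_nonempty.2 ⟨0⟩ h.symm
  · exact Or.inl ⟨hX, hY⟩

lemma le_aleph0_of_lt_aleph1 {c : Cardinal} (h : c < Cardinal.aleph 1) :
    c ≤ Cardinal.aleph0 := by
  rwa [← Cardinal.succ_aleph0, Order.lt_succ_iff] at h

/-- Every infinite countable ordinal is realized as the invariant of some code. -/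
lemma exists_code (β : Ordinal.{0}) (h1 : Ordinal.omega0 ≤ β)
    (h2 : β < (Cardinal.aleph 1).ord) : ∃ X : RelCode, ordInv X = β := by
  have hcard : Cardinal.mk β.ToType = Cardinal.mk ℕ := by
    rw [Cardinal.mk_toType, Cardinal.mk_nat]
    apply le_antisymm
    · exact le_aleph0_of_lt_aleph1 (Cardinal.lt_ord.1 h2)
    · have := Ordinal.card_le_card h1
      rwa [Ordinal.card_omega0] at this
  haveI : IsWellOrder β.ToType (· < ·) := isWellOrder_lt
  obtain ⟨e⟩ := Cardinal.eq.1 hcard.symm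
  classical
  set X : RelCode := fun p => decide (e p.1 ≤ e p.2) with hX
  have hrel : ∀ m n : ℕ, relOf X m n ↔ e m ≤ e n := by
    intro m n
    simp [relOf, hX]
  have hwo : CodesWO X := by
    constructor
    · refine { refl := ?_, trans := ?_, antisymm := ?_, total := ?_ }
      · intro a; rw [hrel]
      · intro a b c hab hbc; rw [hrel] at *; exact le_trans hab hbc
      · intro a b hab hba
        rw [hrel] at hab hba
        exact e.injective (le_antisymm hab hba)
      · intro a b
        rcases le_total (e a) (e b) with h' | h'
        · exact Or.inl ((hrel a b).2 h')
        · exact Or.inr ((hrel b a).2 h')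
    · intro S hS
      obtain ⟨y, hy, hmin⟩ :=
        (IsWellFounded.wf (r := ((· < ·) : β.ToType → β.ToType → Prop))).has_min
          (e '' S) (hS.image _)
      obtain ⟨m, hm, rfl⟩ := hy
      refine ⟨m, hm, fun n hn => (hrel m n).2 ?_⟩
      exact le_of_not_gt fun hlt => hmin (e n) ⟨n, hn, rfl⟩ hlt
  refine ⟨X, ?_⟩
  rw [ordInv, dif_pos hwo]
  letI := isWellOrder_sLT hwo
  rw [← Ordinal.type_toType β]
  refine Ordinal.type_eq.2 ⟨RelIso.mk e ?_⟩
  intro a b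
  show e a < e b ↔ sLT X a b
  unfold sLT
  rw [hrel, lt_iff_le_and_ne]
  constructor
  · rintro ⟨hle, hne⟩; exact ⟨hle, fun hab => hne (by rw [hab])⟩
  · rintro ⟨hle, hne⟩; exact ⟨hle, fun hab => hne (e.injective hab)⟩

lemma card_quot : Cardinal.mk (Quot fun X Y : RelCode => (X, Y) ∈ Eomega1)
    = Cardinal.aleph 1 := by
  haveI : IsWellOrder ((Cardinal.aleph 1).ord.ToType) (· < ·) := isWellOrder_lt
  set r := fun X Y : RelCode => (X, Y) ∈ Eomega1 with hr
  apply le_antisymm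
  · -- upper bound: inject into `(aleph 1).ord.ToType`
    have hmap : ∀ a b : RelCode, r a b →
        ((Ordinal.ToType.mk (o := (Cardinal.aleph 1).ord)) ⟨ordInv a, ordInv_lt a⟩ : _)
        = (Ordinal.ToType.mk (o := (Cardinal.aleph 1).ord)) ⟨ordInv b, ordInv_lt b⟩ := by
      intro a b hab
      congr 1
      exact Subtype.ext (ordInv_eq_of_E hab)
    have hinj : Function.Injective (Quot.lift _ hmap) := by
      intro q1 q2
      refine Quot.induction_on₂ q1 q2 fun a b h => ?_
      have h2 : ordInv a = ordInv b := by
        have := (Ordinal.ToType.mk (o := (Cardinal.aleph 1).ord)).injective h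
        exact congrArg Subtype.val this
      exact Quot.sound (E_of_ordInv_eq h2)
    calc Cardinal.mk (Quot r) ≤ Cardinal.mk (Cardinal.aleph 1).ord.ToType :=
          Cardinal.mk_le_of_injective hinj
      _ = Cardinal.aleph 1 := by rw [Cardinal.mk_toType, Cardinal.card_ord]
  · -- lower bound: inject `(aleph 1).ord.ToType` into the quotient
    have hβ : ∀ x : (Cardinal.aleph 1).ord.ToType,
        Ordinal.omega0 ≤ Ordinal.omega0 + Ordinal.typein (· < ·) x ∧
        Ordinal.omega0 + Ordinal.typein (· < ·) x < (Cardinal.aleph 1).ord := by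
      intro x
      constructor
      · exact le_self_add
      · rw [Cardinal.lt_ord, Ordinal.card_add, Ordinal.card_omega0]
        have htlt : Ordinal.typein ((· < ·) : (Cardinal.aleph 1).ord.ToType → (Cardinal.aleph 1).ord.ToType → Prop) x
            < (Cardinal.aleph 1).ord := by
          have := Ordinal.typein_lt_type ((· < ·) : (Cardinal.aleph 1).ord.ToType → (Cardinal.aleph 1).ord.ToType → Prop) x
          rwa [Ordinal.type_toType] at this
        have hle : ((Ordinal.typein (· < ·) x : Ordinal)).card ≤ Cardinal.aleph0 :=
          le_aleph0_of_lt_aleph1 (Cardinal.lt_ord.1 htlt)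
        calc Cardinal.aleph0 + (Ordinal.typein (· < ·) x).card
            ≤ Cardinal.aleph0 + Cardinal.aleph0 := by
              exact add_le_add_right hle _
          _ = Cardinal.aleph0 := Cardinal.aleph0_add_aleph0
          _ < Cardinal.aleph 1 := Cardinal.aleph0_lt_aleph_one
    have hg : ∀ x : (Cardinal.aleph 1).ord.ToType,
        ∃ X : RelCode, ordInv X = Ordinal.omega0 + Ordinal.typein (· < ·) x :=
      fun x => exists_code _ (hβ x).1 (hβ x).2
    choose g hgspec using hg
    have hinj : Function.Injective fun x => Quot.mk r (g x) := by
      intro x y hxy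
      have hE : r (g x) (g y) := by
        have := Quot.eq.1 hxy
        exact (eomega1_equiv.eqvGen_iff).1 this
      have := ordInv_eq_of_E hE
      rw [hgspec x, hgspec y] at this
      have := (add_right_inj _).1 this
      exact Ordinal.typein_injective _ this
    calc Cardinal.aleph 1 = Cardinal.mk (Cardinal.aleph 1).ord.ToType := by
          rw [Cardinal.mk_toType, Cardinal.card_ord]
      _ ≤ Cardinal.mk (Quot r) := Cardinal.mk_le_of_injective hinj

end Aux

/-- `E_{ω₁}` is an equivalence relation, it is an analytic subset of
`((ℕ × ℕ) → Bool) × ((ℕ × ℕ) → Bool)`, and its quotient has cardinality exactly `ℵ₁`. -/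
theorem statement14 :
    (Equivalence fun X Y : RelCode => (X, Y) ∈ Eomega1) ∧
    AnalyticSet Eomega1 ∧
    Cardinal.mk (Quot fun X Y : RelCode => (X, Y) ∈ Eomega1) = Cardinal.aleph 1 := by
  exact ⟨eomega1_equiv, analyticSet_eomega1, card_quot⟩
end
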